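/- Let r > d > 0, (x₀,y₀) ∈ (0,1)², x₀ ≠ y₀. Then μ ≠ 0, and for all u ∈ [0, s₀): exp(∫₀^u R(x_α,y_α)dα) = [(λ/μ + 1 − 1/μ)/((λ/μ)e^{ru} + e^{du} − 1/μ)] · [(λ/μ + 1 + 1/μ)/((λ/μ)e^{ru} + e^{du} + 1/μ)] · [((r/d)(λ/μ) + 1)/((r/d)(λ/μ)e^{ru} + e^{du})] · e^{(r+d)u}. -/

import Mathlib

/-- The coefficient `Q(x,y) = (r+d)x − r/2 − (r/2)(x/y) − d·x²`. -/
noncomputable def Qfun (r d x y : ℝ) : ℝ :=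
  (r + d) * x - r / 2 - r / 2 * (x / y) - d * x ^ 2

/-- The coefficient `R(x,y) = r/(2x) + r/(2y) − d·x − d·y`. -/
noncomputable def Rfun (r d x y : ℝ) : ℝ :=
  r / (2 * x) + r / (2 * y) - d * x - d * y

/-- The integration constant `λ = (2d·x₀y₀ − d(x₀+y₀))/((x₀−y₀)(r−d))`. -/
noncomputable def lamOf (r d x₀ y₀ : ℝ) : ℝ :=
  (2 * d * x₀ * y₀ - d * (x₀ + y₀)) / ((x₀ - y₀) * (r - d))

/-- The integration constant `μ = (−2d·x₀y₀ + r(x₀+y₀))/((x₀−y₀)(r−d))`. -/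
noncomputable def muOf (r d x₀ y₀ : ℝ) : ℝ :=
  (-(2 * d * x₀ * y₀) + r * (x₀ + y₀)) / ((x₀ - y₀) * (r - d))

/-- The characteristic curve `x_s = (λre^{rs} + μde^{ds})/(d(λe^{rs} + μe^{ds} + 1))`. -/
noncomputable def xChar (r d lam mu s : ℝ) : ℝ :=
  (lam * r * Real.exp (r * s) + mu * d * Real.exp (d * s))
    / (d * (lam * Real.exp (r * s) + mu * Real.exp (d * s) + 1))

/-- The characteristic curve `y_s = (λre^{rs} + μde^{ds})/(d(λe^{rs} + μe^{ds} − 1))`. -/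
noncomputable def yChar (r d lam mu s : ℝ) : ℝ :=
  (lam * r * Real.exp (r * s) + mu * d * Real.exp (d * s))
    / (d * (lam * Real.exp (r * s) + mu * Real.exp (d * s) - 1))

/-- The time `s₀ = log((x₀ + y₀ − 2x₀y₀)/(x₀ + y₀ − 2(d/r)x₀y₀))/(d − r)`. -/
noncomputable def s0Of (r d x₀ y₀ : ℝ) : ℝ :=
  Real.log ((x₀ + y₀ - 2 * x₀ * y₀) / (x₀ + y₀ - 2 * (d / r) * x₀ * y₀)) / (d - r)

open MeasureTheory Real

lemma ftc_aux (r d L M c u : ℝ) (hd : 0 < d) (hc : c ≠ 0) (hu : 0 ≤ u)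
    (hB : ∀ s ∈ Set.Icc (0:ℝ) u, 0 < c * (L*r*Real.exp (r*s) + M*d*Real.exp (d*s)))
    (hA1 : ∀ s ∈ Set.Icc (0:ℝ) u, 0 < c * (L*Real.exp (r*s) + M*Real.exp (d*s)) - c)
    (hA2 : ∀ s ∈ Set.Icc (0:ℝ) u, 0 < c * (L*Real.exp (r*s) + M*Real.exp (d*s)) + c) :
    Real.exp (∫ α in (0:ℝ)..u, Rfun r d (xChar r d L M α) (yChar r d L M α))
      = (L*r + M*d)/(L*r*Real.exp (r*u)+M*d*Real.exp (d*u))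
        * (((L+M)^2-1)/((L*Real.exp (r*u)+M*Real.exp (d*u))^2-1))
        * Real.exp ((r+d)*u) := by
  classical
  set A : ℝ → ℝ := fun s => L*Real.exp (r*s) + M*Real.exp (d*s) with hAdef
  set B : ℝ → ℝ := fun s => L*r*Real.exp (r*s) + M*d*Real.exp (d*s) with hBdef
  set B' : ℝ → ℝ := fun s => L*r^2*Real.exp (r*s) + M*d^2*Real.exp (d*s) with hB'def
  have hAd : ∀ s, HasDerivAt A (B s) s := by
    intro s
    have h1 : HasDerivAt (fun t => Real.exp (r*t)) (r * Real.exp (r*s)) s := by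
      simpa [mul_comm] using ((hasDerivAt_id s).const_mul r).exp
    have h2 : HasDerivAt (fun t => Real.exp (d*t)) (d * Real.exp (d*s)) s := by
      simpa [mul_comm] using ((hasDerivAt_id s).const_mul d).exp
    have := (h1.const_mul L).add (h2.const_mul M)
    exact this.congr_deriv (by simp only [hBdef]; ring)
  have hBd : ∀ s, HasDerivAt B (B' s) s := by
    intro s
    have h1 : HasDerivAt (fun t => Real.exp (r*t)) (r * Real.exp (r*s)) s := by
      simpa [mul_comm] using ((hasDerivAt_id s).const_mul r).exp
    have h2 : HasDerivAt (fun t => Real.exp (d*t)) (d * Real.exp (d*s)) s := by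
      simpa [mul_comm] using ((hasDerivAt_id s).const_mul d).exp
    have := (h1.const_mul (L*r)).add (h2.const_mul (M*d))
    exact this.congr_deriv (by simp only [hB'def]; ring)
  have hc2 : (0:ℝ) < c^2 := by positivity
  -- nonvanishing facts
  have hBne : ∀ s ∈ Set.Icc (0:ℝ) u, B s ≠ 0 := by
    intro s hs
    have h := hB s hs
    intro h0
    rw [show (L*r*Real.exp (r*s) + M*d*Real.exp (d*s)) = B s from rfl, h0, mul_zero] at h
    exact lt_irrefl 0 h
  have hAeq : ∀ s, (L*Real.exp (r*s) + M*Real.exp (d*s)) = A s := fun s => rfl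
  have hA1' : ∀ s ∈ Set.Icc (0:ℝ) u, A s - 1 ≠ 0 := by
    intro s hs h0
    have h1 := hA1 s hs
    rw [hAeq] at h1
    have hA1s : A s = 1 := by linarith [sub_eq_zero.mp h0]
    rw [hA1s] at h1
    simp at h1
  have hA2' : ∀ s ∈ Set.Icc (0:ℝ) u, A s + 1 ≠ 0 := by
    intro s hs h0
    have h1 := hA1 s hs
    have h2 := hA2 s hs
    rw [hAeq] at h1 h2
    have hA1s : A s = -1 := by linarith
    rw [hA1s] at h2
    simp at h2
  have hAsq : ∀ s ∈ Set.Icc (0:ℝ) u, 0 < (A s)^2 - 1 := by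
    intro s hs
    have h1 := hA1 s hs; have h2 := hA2 s hs
    rw [hAeq] at h1 h2
    nlinarith [mul_pos h1 h2]
  have hAsqne : ∀ s ∈ Set.Icc (0:ℝ) u, (A s)^2 - 1 ≠ 0 :=
    fun s hs => ne_of_gt (hAsq s hs)
  -- the G function
  set G : ℝ → ℝ := fun s => (r+d)*s - Real.log (B s) - Real.log ((A s)^2 - 1) with hGdef
  set g : ℝ → ℝ := fun s => (r+d) - B' s / B s - (2*A s*B s)/((A s)^2-1) with hgdef
  have hGd : ∀ s ∈ Set.Icc (0:ℝ) u, HasDerivAt G (g s) s := by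
    intro s hs
    have h1 : HasDerivAt (fun t => (r+d)*t) (r+d) s := by
      simpa using (hasDerivAt_id s).const_mul (r+d)
    have h2 : HasDerivAt (fun t => Real.log (B t)) (B' s / B s) s :=
      (hBd s).log (hBne s hs)
    have h3 : HasDerivAt (fun t => (A t)^2 - 1) (2*A s*B s) s := by
      have := ((hAd s).pow 2).sub_const 1
      exact this.congr_deriv (by norm_num)
    have h4 : HasDerivAt (fun t => Real.log ((A t)^2-1)) ((2*A s*B s)/((A s)^2-1)) s :=
      h3.log (hAsqne s hs)
    exact (h1.sub h2).sub h4
  -- continuity of g on [0,u]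
  have contA : Continuous A := by rw [hAdef]; fun_prop
  have contB : Continuous B := by rw [hBdef]; fun_prop
  have contB' : Continuous B' := by rw [hB'def]; fun_prop
  have contg : ContinuousOn g (Set.Icc (0:ℝ) u) := by
    apply ContinuousOn.sub
    apply ContinuousOn.sub continuousOn_const
    · exact contB'.continuousOn.div contB.continuousOn hBne
    · exact ((continuous_const.mul contA).mul contB).continuousOn.div
        ((contA.pow 2).sub continuous_const).continuousOn hAsqne
  have huIcc : Set.uIcc (0:ℝ) u = Set.Icc 0 u := Set.uIcc_of_le hu
  have hint : IntervalIntegrable g volume 0 u := by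
    apply ContinuousOn.intervalIntegrable
    rwa [huIcc]
  -- pointwise equality of the integrands
  have hRg : Set.EqOn (fun α => Rfun r d (xChar r d L M α) (yChar r d L M α)) g
      (Set.uIcc (0:ℝ) u) := by
    intro s hs
    rw [huIcc] at hs
    have hB1 := hBne s hs
    have h1 := hA1' s hs
    have h2 := hA2' s hs
    have hsq := hAsqne s hs
    simp only [Rfun, xChar, yChar, hgdef]
    rw [show (L * Real.exp (r*s) + M * Real.exp (d*s)) = A s from rfl,
      show (L * r * Real.exp (r*s) + M * d * Real.exp (d*s)) = B s from rfl]
    have hkey : (r+d) * B s - B' s = r * d * A s := by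
      simp only [hAdef, hBdef, hB'def]; ring
    have hd' : (d:ℝ) ≠ 0 := ne_of_gt hd
    have hB'eq : B' s = (r+d)*B s - r*d*A s := by linarith [hkey]
    rw [hB'eq]
    field_simp
    ring
  have hintR : ∫ α in (0:ℝ)..u, Rfun r d (xChar r d L M α) (yChar r d L M α)
      = ∫ α in (0:ℝ)..u, g α := intervalIntegral.integral_congr hRg
  have hFTC : ∫ α in (0:ℝ)..u, g α = G u - G 0 := by
    apply intervalIntegral.integral_eq_sub_of_hasDerivAt
    · intro x hx; rw [huIcc] at hx; exact hGd x hx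
    · exact hint
  have h0mem : (0:ℝ) ∈ Set.Icc (0:ℝ) u := ⟨le_refl _, hu⟩
  have humem : u ∈ Set.Icc (0:ℝ) u := ⟨hu, le_refl _⟩
  have hB0pos : 0 < B 0 / B u := by
    have h0 : 0 < c * B 0 := hB 0 h0mem
    have h2 : 0 < c * B u := hB u humem
    rw [show B 0 / B u = (c * B 0) / (c * B u) from (mul_div_mul_left _ _ hc).symm]
    exact div_pos h0 h2
  have hApos : 0 < ((A 0)^2 - 1) / ((A u)^2 - 1) :=
    div_pos (hAsq 0 h0mem) (hAsq u humem)
  rw [hintR, hFTC, hGdef]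
  simp only
  have hexpand : (r+d)*u - Real.log (B u) - Real.log ((A u)^2-1)
      - ((r+d)*0 - Real.log (B 0) - Real.log ((A 0)^2-1))
      = (r+d)*u + Real.log (B 0 / B u) + Real.log (((A 0)^2-1)/((A u)^2-1)) := by
    rw [Real.log_div (hBne 0 h0mem) (hBne u humem),
      Real.log_div (hAsqne 0 h0mem) (hAsqne u humem)]
    ring
  rw [hexpand, Real.exp_add, Real.exp_add, Real.exp_log hB0pos, Real.exp_log hApos]
  rw [show B 0 = L*r+M*d by simp [hBdef], show A 0 = L + M by simp [hAdef]]
  ring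

set_option maxHeartbeats 1000000 in
/-- the closed form of `exp(∫₀^u R(x_α,y_α)dα)` along the characteristic
curves, for `u ∈ [0, s₀)`. -/
theorem exp_integral_R_closed_form (r d x₀ y₀ : ℝ) (hd : 0 < d) (hrd : d < r)
    (hx₀ : x₀ ∈ Set.Ioo (0 : ℝ) 1) (hy₀ : y₀ ∈ Set.Ioo (0 : ℝ) 1) (hne : x₀ ≠ y₀)
    (X Y : ℝ → ℝ)
    (hX : X = fun s => xChar r d (lamOf r d x₀ y₀) (muOf r d x₀ y₀) s)
    (hY : Y = fun s => yChar r d (lamOf r d x₀ y₀) (muOf r d x₀ y₀) s)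
    (lam mu : ℝ) (hlam : lam = lamOf r d x₀ y₀) (hmu : mu = muOf r d x₀ y₀) :
    mu ≠ 0 ∧
    ∀ u ∈ Set.Ico (0 : ℝ) (s0Of r d x₀ y₀),
      Real.exp (∫ α in (0 : ℝ)..u, Rfun r d (X α) (Y α))
        = (lam / mu + 1 - 1 / mu)
              / (lam / mu * Real.exp (r * u) + Real.exp (d * u) - 1 / mu)
            * ((lam / mu + 1 + 1 / mu)
              / (lam / mu * Real.exp (r * u) + Real.exp (d * u) + 1 / mu))
            * ((r / d * (lam / mu) + 1)
              / (r / d * (lam / mu) * Real.exp (r * u) + Real.exp (d * u)))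
            * Real.exp ((r + d) * u) := by
  subst hX hY hlam hmu
  obtain ⟨hx0, hx1⟩ := hx₀
  obtain ⟨hy0, hy1⟩ := hy₀
  set L := lamOf r d x₀ y₀ with hL
  set M := muOf r d x₀ y₀ with hM
  set c := x₀ - y₀ with hcdef
  have hc : c ≠ 0 := sub_ne_zero.2 hne
  have hr : 0 < r := lt_trans hd hrd
  have hrd' : (0:ℝ) < r - d := by linarith
  set p := x₀ + y₀ with hpdef
  set q := x₀ * y₀ with hqdef
  have hq : 0 < q := mul_pos hx0 hy0
  have hpq : 0 < p - 2*q := by nlinarith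
  have hrpq : 0 < r*p - 2*d*q := by nlinarith
  have hcp1 : c < p - 2*q := by nlinarith
  have hcp2 : -c < p - 2*q := by nlinarith
  have hMne : M ≠ 0 := by
    rw [hM, muOf]
    apply div_ne_zero
    · intro h; nlinarith [h]
    · exact mul_ne_zero hc (ne_of_gt hrd')
  refine ⟨hMne, ?_⟩
  intro u hu
  obtain ⟨hu0, hus⟩ := hu
  -- c*L and c*M
  have hcL : c * L = -(d*(p-2*q))/(r-d) := by
    rw [hL, lamOf]
    field_simp
    ring
  have hcM : c * M = (r*p-2*d*q)/(r-d) := by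
    rw [hM, muOf]
    field_simp
    ring
  -- key inequality for s in [0,u]
  have hkey : ∀ s ∈ Set.Icc (0:ℝ) u, r*(p-2*q)*Real.exp (r*s) < (r*p-2*d*q)*Real.exp (d*s) := by
    intro s hs
    obtain ⟨hs0, hsu⟩ := hs
    have hss0 : s < s0Of r d x₀ y₀ := lt_of_le_of_lt hsu hus
    have hden : p - 2*(d/r)*q = (r*p - 2*d*q)/r := by field_simp
    have hDden : 0 < p - 2*(d/r)*q := by rw [hden]; positivity
    set D := (p - 2*q)/(p - 2*(d/r)*q) with hDdef
    have hDpos : 0 < D := div_pos hpq hDden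
    have hDval : (r*p-2*d*q) * D = r*(p-2*q) := by
      rw [hDdef, hden]
      field_simp [hrpq.ne', hr.ne']
    have hs0eq : s0Of r d x₀ y₀ = Real.log D / (d-r) := by
      rw [s0Of, hDdef, hpdef, hqdef]; ring_nf
    have hlog : Real.log D < (d-r)*s := by
      rw [hs0eq] at hss0
      have h := (lt_div_iff_of_neg (by linarith : d - r < 0)).mp hss0
      linarith [h]
    have hexp : D < Real.exp ((d-r)*s) := by
      calc D = Real.exp (Real.log D) := (Real.exp_log hDpos).symm
        _ < Real.exp ((d-r)*s) := Real.exp_lt_exp.2 hlog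
    have hsplit : Real.exp (d*s) = Real.exp ((d-r)*s) * Real.exp (r*s) := by
      rw [← Real.exp_add]; ring_nf
    rw [hsplit]
    have hEr : 0 < Real.exp (r*s) := Real.exp_pos _
    calc r*(p-2*q)*Real.exp (r*s) = ((r*p-2*d*q)*D) * Real.exp (r*s) := by rw [hDval]
      _ < (r*p-2*d*q)*(Real.exp ((d-r)*s) * Real.exp (r*s)) := by
          nlinarith [mul_lt_mul_of_pos_right (mul_lt_mul_of_pos_left hexp hrpq) hEr]
  -- sign facts
  have hB : ∀ s ∈ Set.Icc (0:ℝ) u, 0 < c * (L*r*Real.exp (r*s) + M*d*Real.exp (d*s)) := by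
    intro s hs
    have hk := hkey s hs
    have heq : c * (L*r*Real.exp (r*s) + M*d*Real.exp (d*s))
        = d*((r*p-2*d*q)*Real.exp (d*s) - r*(p-2*q)*Real.exp (r*s))/(r-d) := by
      have h1 : c * (L*r*Real.exp (r*s) + M*d*Real.exp (d*s))
          = (c*L)*(r*Real.exp (r*s)) + (c*M)*(d*Real.exp (d*s)) := by ring
      rw [h1, hcL, hcM]; field_simp; ring
    rw [heq]
    apply div_pos _ hrd'
    nlinarith
  have hA12 : ∀ s ∈ Set.Icc (0:ℝ) u,
      0 < c * (L*Real.exp (r*s) + M*Real.exp (d*s)) - c ∧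
      0 < c * (L*Real.exp (r*s) + M*Real.exp (d*s)) + c := by
    intro s hs
    have hk := hkey s hs
    have hEd1 : 1 ≤ Real.exp (d*s) := by
      rw [show (1:ℝ) = Real.exp 0 from (Real.exp_zero).symm]
      apply Real.exp_le_exp.2
      exact mul_nonneg hd.le hs.1
    have heq : c * (L*Real.exp (r*s) + M*Real.exp (d*s))
        = ((r*p-2*d*q)*Real.exp (d*s) - d*(p-2*q)*Real.exp (r*s))/(r-d) := by
      have h1 : c * (L*Real.exp (r*s) + M*Real.exp (d*s))
          = (c*L)*Real.exp (r*s) + (c*M)*Real.exp (d*s) := by ring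
      rw [h1, hcL, hcM]; field_simp; ring
    have h1 : mul_lt_mul_of_pos_left hk hd = mul_lt_mul_of_pos_left hk hd := rfl
    have hdk : d*(r*(p-2*q)*Real.exp (r*s)) < d*((r*p-2*d*q)*Real.exp (d*s)) :=
      mul_lt_mul_of_pos_left hk hd
    have h2 : 0 ≤ (r-d)*(r*p-2*d*q)*(Real.exp (d*s) - 1) := by
      apply mul_nonneg (mul_nonneg (le_of_lt hrd') (le_of_lt hrpq))
      linarith
    have h5 : 0 < q*(r-d)^2 := by positivity
    constructor
    · rw [heq]
      rw [lt_sub_iff_add_lt, zero_add, lt_div_iff₀ hrd']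
      nlinarith [hdk, h2, h5, hr, mul_pos (mul_pos hrd' hr) (sub_pos.mpr hcp1)]
    · rw [heq]
      have : -c < ((r*p-2*d*q)*Real.exp (d*s) - d*(p-2*q)*Real.exp (r*s))/(r-d) := by
        rw [lt_div_iff₀ hrd']
        nlinarith [hdk, h2, h5, hr, mul_pos (mul_pos hrd' hr) (sub_pos.mpr hcp2)]
      linarith
  have hA1 := fun s hs => (hA12 s hs).1
  have hA2 := fun s hs => (hA12 s hs).2
  have hft := ftc_aux r d L M c u hd hc hu0 hB hA1 hA2
  simp only [] at hft ⊢
  rw [hft]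
  -- now pure algebra
  set E := Real.exp (r*u) with hEdef
  set F := Real.exp (d*u) with hFdef
  have humem : u ∈ Set.Icc (0:ℝ) u := ⟨hu0, le_refl _⟩
  have hBu : L*r*E + M*d*F ≠ 0 := by
    intro h
    have := hB u humem
    rw [show L*r*Real.exp (r*u) + M*d*Real.exp (d*u) = L*r*E+M*d*F from rfl, h, mul_zero] at this
    exact lt_irrefl 0 this
  have hAu1 : L*E + M*F - 1 ≠ 0 := by
    intro h
    have h1 := hA1 u humem
    have h2 := hA2 u humem
    rw [show L*Real.exp (r*u) + M*Real.exp (d*u) = L*E+M*F from rfl] at h1 h2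
    have hAeq : L*E+M*F = 1 := by linarith [sub_eq_zero.mp h]
    rw [hAeq, mul_one] at h1
    linarith
  have hAu2 : L*E + M*F + 1 ≠ 0 := by
    intro h
    have h1 := hA1 u humem
    have h2 := hA2 u humem
    rw [show L*Real.exp (r*u) + M*Real.exp (d*u) = L*E+M*F from rfl] at h1 h2
    have hAeq : L*E+M*F = -1 := by linarith
    rw [hAeq] at h2
    simp at h2
  have hdne : d ≠ 0 := ne_of_gt hd
  have e1 : L/M + 1 - 1/M = (L+M-1)/M := by field_simp
  have e2 : L/M*E + F - 1/M = (L*E+M*F-1)/M := by field_simp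
  have e3 : L/M + 1 + 1/M = (L+M+1)/M := by field_simp
  have e4 : L/M*E + F + 1/M = (L*E+M*F+1)/M := by field_simp
  have e5 : r/d*(L/M) + 1 = (L*r+M*d)/(d*M) := by field_simp
  have e6 : r/d*(L/M)*E + F = (L*r*E+M*d*F)/(d*M) := by field_simp
  rw [e1, e2, e3, e4, e5, e6]
  rw [div_div_div_cancel_right₀ hMne, div_div_div_cancel_right₀ hMne,
    div_div_div_cancel_right₀ (mul_ne_zero hdne hMne)]
  have hfac : (L*E+M*F)^2 - 1 = (L*E+M*F-1)*(L*E+M*F+1) := by ring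
  rw [hfac]
  field_simp
  ring
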